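/- Let 𝓕 be a finite family of distinct sets with levels 𝓕₁, …, 𝓕_t and auxiliary graph H, and let α be the size of the largest union-free subfamily of 𝓕. Suppose the vertex set {1, …, t} of H is partitioned into independent sets I₁, I₂, …, I_s by the following greedy algorithm: I₁ begins with vertex 1, and after choosing its j-th element a_j¹ it appends the least vertex a_{j+1}¹ > a_j¹ not adjacent to a_j¹, until no further vertex can be added; having constructed I₁, …, I_i, the set I_{i+1} begins with the least vertex not in I₁ ∪ ⋯ ∪ I_i, and after choosing its j-th element a_j^{i+1} it appends the least vertex a_{j+1}^{i+1} > a_j^{i+1} that lies in no previously chosen independent set and is not adjacent to a_j^{i+1}, until no further vertex can be added. Then for every i > 1, Σ_{j ∈ I_i} |𝓕_j| ≤ α − 2i + 3. -/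

import Mathlib

open scoped Classical in
/-- The maximal (by inclusion) sets of a family. -/
noncomputable def maxSets (G : Finset (Finset ℕ)) : Finset (Finset ℕ) :=
  G.filter fun X => ∀ Y ∈ G, ¬ X ⊂ Y

/-- `rem F k` is what remains of the family `F` after `k` rounds of peeling off
the maximal sets. -/
noncomputable def rem (F : Finset (Finset ℕ)) : ℕ → Finset (Finset ℕ)
  | 0 => F
  | k + 1 => rem F k \ maxSets (rem F k)

open scoped Classical in
/-- The length `t` of the longest chain (under inclusion) in the family `F`. -/
noncomputable def famHeight (F : Finset (Finset ℕ)) : ℕ :=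
  (Finset.filter (fun C : Finset (Finset ℕ) => IsChain (· ⊆ ·) (C : Set (Finset ℕ))) F.powerset).sup Finset.card

/-- The `i`-th level `𝓕ᵢ` of the family `F`: with `t = famHeight F`,
`𝓕_t` is the family of maximal sets of `F` and, downwards, `𝓕ᵢ` is the family of
maximal sets of `F \ (𝓕_{i+1} ∪ ⋯ ∪ 𝓕_t)`.  A set has *rank* `i` if it lies in
`level F i`. -/
noncomputable def level (F : Finset (Finset ℕ)) (i : ℕ) : Finset (Finset ℕ) :=
  maxSets (rem F (famHeight F - i))

noncomputable def uH (F : Finset (Finset ℕ)) (X : Finset ℕ) : ℕ := by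
  classical exact famHeight (F.filter fun Z => X ⊆ Z)

lemma chain_card_le {G C : Finset (Finset ℕ)} (hC : C ⊆ G)
    (hchain : IsChain (· ⊆ ·) (C : Set (Finset ℕ))) : C.card ≤ famHeight G := by
  classical
  apply Finset.le_sup (f := Finset.card)
  simp [Finset.mem_filter, Finset.mem_powerset, hC, hchain]

lemma exists_chain (G : Finset (Finset ℕ)) :
    ∃ C, C ⊆ G ∧ IsChain (· ⊆ ·) (C : Set (Finset ℕ)) ∧ C.card = famHeight G := by
  classical
  have hne : (G.powerset.filter fun C : Finset (Finset ℕ) => IsChain (· ⊆ ·) (C : Set (Finset ℕ))).Nonempty := by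
    refine ⟨∅, ?_⟩
    simp [Finset.mem_filter, Finset.mem_powerset]
  obtain ⟨C, hC, hEq⟩ := Finset.exists_mem_eq_sup
    (G.powerset.filter fun C : Finset (Finset ℕ) => IsChain (· ⊆ ·) (C : Set (Finset ℕ)))
    hne Finset.card
  simp only [Finset.mem_filter, Finset.mem_powerset] at hC
  exact ⟨C, hC.1, hC.2, hEq.symm⟩

lemma uH_pos {F : Finset (Finset ℕ)} {X : Finset ℕ} (hX : X ∈ F) : 1 ≤ uH F X := by
  classical
  have : ({X} : Finset (Finset ℕ)).card ≤ uH F X := by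
    apply chain_card_le
    · intro Y hY
      simp only [Finset.mem_singleton] at hY
      subst hY
      simp [Finset.mem_filter, hX]
    · simp [Set.Subsingleton.isChain, Set.subsingleton_singleton]
  simpa using this

lemma uH_le (F : Finset (Finset ℕ)) (X : Finset ℕ) : uH F X ≤ famHeight F := by
  classical
  obtain ⟨C, hsub, hchain, hcard⟩ := exists_chain (F.filter fun Z => X ⊆ Z)
  rw [show famHeight (F.filter fun Z => X ⊆ Z) = uH F X from rfl] at hcard
  rw [← hcard]
  exact chain_card_le (hsub.trans (Finset.filter_subset _ _)) hchain

lemma uH_lt {F : Finset (Finset ℕ)} {X Z : Finset ℕ} (hX : X ∈ F) (hZ : Z ∈ F)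
    (hXZ : X ⊂ Z) : uH F Z < uH F X := by
  classical
  obtain ⟨C, hsub, hchain, hcard⟩ := exists_chain (F.filter fun Z' => Z ⊆ Z')
  have hCZ : ∀ c ∈ C, Z ⊆ c := fun c hc => (Finset.mem_filter.mp (hsub hc)).2
  have hXC : X ∉ C := by
    intro h
    have h2 : X < Z := Finset.lt_iff_ssubset.mpr hXZ
    exact absurd (lt_of_lt_of_le h2 (hCZ X h)) (lt_irrefl X)
  have hins : (insert X C).card ≤ uH F X := by
    apply chain_card_le
    · intro Y hY
      rcases Finset.mem_insert.mp hY with h | h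
      · subst h; simp [Finset.mem_filter, hX]
      · have := hsub h
        simp only [Finset.mem_filter] at this ⊢
        exact ⟨this.1, hXZ.subset.trans (hCZ Y h)⟩
    · have : (insert X (C : Set (Finset ℕ))) = ((insert X C : Finset (Finset ℕ)) : Set (Finset ℕ)) := by
        simp
      rw [← this]
      apply hchain.insert
      intro b hb _
      exact Or.inl ((hXZ.subset).trans (hCZ b hb))
  rw [Finset.card_insert_of_notMem hXC] at hins
  have : uH F Z = C.card := hcard.symm
  omega

lemma chain_exists_least {C : Finset (Finset ℕ)} (hne : C.Nonempty)
    (hchain : IsChain (· ⊆ ·) (C : Set (Finset ℕ))) : ∃ Z ∈ C, ∀ c ∈ C, Z ⊆ c := by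
  obtain ⟨Z, hZ, hmin⟩ := Finset.exists_min_image C (fun c => c.card) hne
  refine ⟨Z, hZ, fun c hc => ?_⟩
  by_cases h : c = Z
  · subst h; rfl
  · rcases hchain hc hZ h with h' | h'
    · have := Finset.eq_of_subset_of_card_le h' (hmin c hc)
      exact absurd this h
      
    · exact h'

lemma exists_ssuperset_ge {F : Finset (Finset ℕ)} {X : Finset ℕ} {m : ℕ}
    (hm : m + 2 ≤ uH F X) : ∃ Z ∈ F, X ⊂ Z ∧ m + 1 ≤ uH F Z := by
  classical
  obtain ⟨C, hsub, hchain, hcard⟩ := exists_chain (F.filter fun Z => X ⊆ Z)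
  have hcard' : m + 2 ≤ C.card := le_trans hm (le_of_eq hcard.symm)
  have hCX : ∀ c ∈ C, X ⊆ c ∧ c ∈ F := by
    intro c hc
    have := Finset.mem_filter.mp (hsub hc)
    exact ⟨this.2, this.1⟩
  set C' := C.erase X with hC'
  have hC'sub : C' ⊆ C := Finset.erase_subset _ _
  have hC'card : m + 1 ≤ C'.card := by
    have := Finset.card_erase_of_mem (a := X) (s := C)
    by_cases hx : X ∈ C
    · rw [Finset.card_erase_of_mem hx]; omega
    · rw [hC', Finset.erase_eq_of_notMem hx]; omega
  have hC'chain : IsChain (· ⊆ ·) (C' : Set (Finset ℕ)) :=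
    fun a ha b hb hne => hchain (hC'sub ha) (hC'sub hb) hne
  have hC'ne : C'.Nonempty := Finset.card_pos.mp (by omega)
  obtain ⟨Z, hZC', hZle⟩ := chain_exists_least hC'ne hC'chain
  have hZF : Z ∈ F := (hCX Z (hC'sub hZC')).2
  have hXZ : X ⊂ Z := by
    refine Finset.ssubset_iff_subset_ne.mpr ⟨(hCX Z (hC'sub hZC')).1, ?_⟩
    intro h
    subst h
    exact (Finset.notMem_erase X C) hZC'
  refine ⟨Z, hZF, hXZ, ?_⟩
  have : C'.card ≤ uH F Z := by
    apply chain_card_le _ hC'chain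
    intro c hc
    rw [Finset.mem_filter]
    exact ⟨(hCX c (hC'sub hc)).2, hZle c hc⟩
  omega

lemma mem_maxSets {G : Finset (Finset ℕ)} {X : Finset ℕ} :
    X ∈ maxSets G ↔ X ∈ G ∧ ∀ Y ∈ G, ¬ X ⊂ Y := by
  classical
  rw [maxSets]
  simp

lemma maxSets_filter (F : Finset (Finset ℕ)) (m : ℕ) :
    maxSets (F.filter fun X => m < uH F X) = F.filter fun X => uH F X = m + 1 := by
  classical
  ext X
  rw [mem_maxSets]
  simp only [Finset.mem_filter]
  constructor
  · rintro ⟨⟨hXF, hm⟩, hmax⟩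
    refine ⟨hXF, ?_⟩
    by_contra hne
    have h2 : m + 2 ≤ uH F X := by omega
    obtain ⟨Z, hZF, hXZ, hZm⟩ := exists_ssuperset_ge h2
    exact hmax Z ⟨hZF, by omega⟩ hXZ
  · rintro ⟨hXF, hu⟩
    refine ⟨⟨hXF, by omega⟩, ?_⟩
    intro Y hY hXY
    have := uH_lt hXF hY.1 hXY
    omega

lemma rem_char (F : Finset (Finset ℕ)) : ∀ m, rem F m = F.filter fun X => m < uH F X := by
  classical
  intro m
  induction m with
  | zero =>
    show F = _
    ext X; simp only [Finset.mem_filter]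
    exact ⟨fun h => ⟨h, uH_pos h⟩, fun h => h.1⟩
  | succ n ih =>
    show rem F n \ maxSets (rem F n) = _
    rw [ih, maxSets_filter]
    ext X
    simp only [Finset.mem_sdiff, Finset.mem_filter, not_and]
    constructor
    · rintro ⟨⟨h1, h2⟩, h3⟩
      refine ⟨h1, ?_⟩
      rcases Nat.lt_or_ge (n+1) (uH F X) with h | h
      · exact h
      · have := h3 h1; omega
    · rintro ⟨h1, h2⟩
      exact ⟨⟨h1, by omega⟩, fun _ => by omega⟩

lemma mem_level {F : Finset (Finset ℕ)} {i : ℕ} {X : Finset ℕ} :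
    X ∈ level F i ↔ X ∈ F ∧ uH F X = (famHeight F - i) + 1 := by
  show X ∈ maxSets (rem F (famHeight F - i)) ↔ _
  rw [rem_char, maxSets_filter, Finset.mem_filter]

lemma level_subset {F : Finset (Finset ℕ)} {i : ℕ} : level F i ⊆ F :=
  fun _ h => (mem_level.mp h).1

lemma exists_level {F : Finset (Finset ℕ)} {X : Finset ℕ} (hX : X ∈ F) :
    ∃ i, 1 ≤ i ∧ i ≤ famHeight F ∧ X ∈ level F i := by
  have h1 := uH_pos hX
  have h2 := uH_le F X
  refine ⟨famHeight F + 1 - uH F X, by omega, by omega, ?_⟩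
  rw [mem_level]
  exact ⟨hX, by omega⟩

lemma level_unique {F : Finset (Finset ℕ)} {i j : ℕ} {X : Finset ℕ}
    (hi : i ≤ famHeight F) (hj : j ≤ famHeight F)
    (hXi : X ∈ level F i) (hXj : X ∈ level F j) : i = j := by
  rw [mem_level] at hXi hXj
  omega

lemma level_lt {F : Finset (Finset ℕ)} {i j : ℕ} {X Z : Finset ℕ}
    (hi : i ≤ famHeight F) (hj : j ≤ famHeight F)
    (hXi : X ∈ level F i) (hZj : Z ∈ level F j) (hXZ : X ⊂ Z) : i < j := by
  rw [mem_level] at hXi hZj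
  have := uH_lt hXi.1 hZj.1 hXZ
  omega

lemma level_antichain {F : Finset (Finset ℕ)} {i : ℕ} {X Z : Finset ℕ}
    (hXi : X ∈ level F i) (hZi : Z ∈ level F i) (hXZ : X ⊂ Z) : False := by
  rw [mem_level] at hXi hZi
  have := uH_lt hXi.1 hZi.1 hXZ
  omega

lemma step_up {F : Finset (Finset ℕ)} {i : ℕ} {X : Finset ℕ}
    (hX : X ∈ level F i) (hi : i < famHeight F) :
    ∃ Z, Z ∈ level F (i + 1) ∧ X ⊂ Z := by
  rw [mem_level] at hX
  have h2 : (famHeight F - (i+1)) + 2 ≤ uH F X := by omega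
  obtain ⟨Z, hZF, hXZ, hZm⟩ := exists_ssuperset_ge h2
  have hlt := uH_lt hX.1 hZF hXZ
  refine ⟨Z, ?_, hXZ⟩
  rw [mem_level]
  exact ⟨hZF, by omega⟩

lemma exists_chain_fun {F : Finset (Finset ℕ)} {p : ℕ} {X : Finset ℕ}
    (hX : X ∈ level F p) :
    ∀ q, p ≤ q → q ≤ famHeight F → ∃ g : ℕ → Finset ℕ,
      g p = X ∧ (∀ j, p ≤ j → j ≤ q → g j ∈ level F j) ∧
      (∀ j k, p ≤ j → j < k → k ≤ q → g j ⊂ g k) := by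
  intro q hpq hqt
  induction q, hpq using Nat.le_induction with
  | base =>
    refine ⟨fun _ => X, rfl, ?_, ?_⟩
    · intro j h1 h2
      have : j = p := le_antisymm h2 h1
      subst this; exact hX
    · intro j k h1 h2 h3; omega
  | succ n hn ih =>
    obtain ⟨g, hgp, hgmem, hgss⟩ := ih (by omega)
    obtain ⟨Z, hZ, hgZ⟩ := step_up (hgmem n hn le_rfl) (by omega)
    refine ⟨fun j => if j ≤ n then g j else Z, ?_, ?_, ?_⟩
    · simp [hn]; exact hgp
    · intro j h1 h2
      by_cases hj : j ≤ n
      · simp [hj]; exact hgmem j h1 hj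
      · have : j = n + 1 := by omega
        subst this
        simp [hj]; exact hZ
    · intro j k h1 h2 h3
      by_cases hk : k ≤ n
      · simp [show j ≤ n by omega, hk]
        exact hgss j k h1 h2 hk
      · have hk' : k = n + 1 := by omega
        subst hk'
        simp [show j ≤ n by omega, hk]
        rcases Nat.lt_or_ge j n with h | h
        · exact (hgss j n h1 h le_rfl).trans hgZ
        · have : j = n := by omega
          subst this; exact hgZ


/-- The auxiliary graph `H = H(F)` on the vertex set `{1, …, t}`, `t = famHeight F`:
the pair `(i, i')` with `i < i'` is an edge if there exist two disjoint chains
`X` and `Y`, each consisting of exactly one set of each rank `j` for `i ≤ j ≤ i' - 1`,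
such that at most one set in `{X j ∪ Y k}` has rank `i'` and every other set of this
form has rank greater than `i'` or does not belong to `F`. -/
def HEdge (F : Finset (Finset ℕ)) (i i' : ℕ) : Prop :=
  1 ≤ i ∧ i < i' ∧ i' ≤ famHeight F ∧
  ∃ X Y : ℕ → Finset ℕ,
    (∀ j, i ≤ j → j < i' → X j ∈ level F j) ∧
    (∀ j, i ≤ j → j < i' → Y j ∈ level F j) ∧
    (∀ j k, i ≤ j → j < k → k < i' → X j ⊂ X k) ∧
    (∀ j k, i ≤ j → j < k → k < i' → Y j ⊂ Y k) ∧
    (∀ j k, i ≤ j → j < i' → i ≤ k → k < i' → X j ≠ Y k) ∧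
    (∀ j k, i ≤ j → j < i' → i ≤ k → k < i' →
      X j ∪ Y k ∉ F ∨ X j ∪ Y k ∈ level F i' ∨
        ∃ r, i' < r ∧ r ≤ famHeight F ∧ X j ∪ Y k ∈ level F r) ∧
    (∀ j₁ k₁ j₂ k₂, i ≤ j₁ → j₁ < i' → i ≤ k₁ → k₁ < i' →
      i ≤ j₂ → j₂ < i' → i ≤ k₂ → k₂ < i' →
      X j₁ ∪ Y k₁ ∈ level F i' → X j₂ ∪ Y k₂ ∈ level F i' →
      X j₁ ∪ Y k₁ = X j₂ ∪ Y k₂)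

/-- A family of sets is *union-free* if there are no three distinct sets
`X, Y, Z` in the family with `X ∪ Y = Z`. -/
def UnionFree (F : Finset (Finset ℕ)) : Prop :=
  ∀ X ∈ F, ∀ Y ∈ F, ∀ Z ∈ F, X ≠ Y → X ≠ Z → Y ≠ Z → X ∪ Y ≠ Z

/-- The union of the independent sets `I 1, …, I (i-1)` chosen before stage `i`
of the greedy algorithm. -/
def prevSets (I : ℕ → Finset ℕ) (i : ℕ) : Finset ℕ :=
  (Finset.Ico 1 i).biUnion I

/-- Lemma 3: let `α` be the size of the largest union-free subfamily of `F`, and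
suppose the vertex set `{1, …, t}` of the auxiliary graph `H` is partitioned into
sets `I 1, …, I s` by the greedy algorithm:
* (`hmin`) each `I i` begins with the least vertex not lying in any previously
  chosen set (so `I 1` begins with vertex `1`);
* (`hnextNonadj`) after an element `v` of `I i`, the next element `w` of `I i` is
  not adjacent to `v`;
* (`hnextMin`) `w` is the *least* vertex above `v` lying in no previously chosen
  set and not adjacent to `v`, and elements are added until no further vertex can
  be added (if `u > v` is available and not adjacent to `v`, then `I i` contains
  some `w` with `v < w ≤ u`).

Then for every `i > 1`, `∑_{j ∈ I i} |𝓕_j| ≤ α - 2i + 3`. -/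
theorem sum_levels_greedy_le (F : Finset (Finset ℕ)) (α : ℕ)
    (hα : IsGreatest {k | ∃ G ⊆ F, UnionFree G ∧ G.card = k} α)
    (s : ℕ) (I : ℕ → Finset ℕ)
    (hsub : ∀ i ∈ Finset.Icc 1 s, I i ⊆ Finset.Icc 1 (famHeight F))
    (hne : ∀ i ∈ Finset.Icc 1 s, (I i).Nonempty)
    (hcover : ∀ v ∈ Finset.Icc 1 (famHeight F), ∃ i ∈ Finset.Icc 1 s, v ∈ I i)
    (hdisj : ∀ i ∈ Finset.Icc 1 s, ∀ j ∈ Finset.Icc 1 s, i ≠ j → Disjoint (I i) (I j))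
    (hmin : ∀ i ∈ Finset.Icc 1 s, ∀ v ∈ I i, (∀ w ∈ I i, v ≤ w) →
      ∀ u ∈ Finset.Icc 1 (famHeight F), u ∉ prevSets I i → v ≤ u)
    (hnextNonadj : ∀ i ∈ Finset.Icc 1 s, ∀ v ∈ I i, ∀ w ∈ I i, v < w →
      (∀ x ∈ I i, v < x → w ≤ x) → ¬ HEdge F v w)
    (hnextMin : ∀ i ∈ Finset.Icc 1 s, ∀ v ∈ I i, ∀ u ∈ Finset.Icc 1 (famHeight F),
      v < u → u ∉ prevSets I i → ¬ HEdge F v u → ∃ w ∈ I i, v < w ∧ w ≤ u) :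
    ∀ i, 1 < i → i ≤ s →
      ((∑ j ∈ I i, (level F j).card : ℤ)) ≤ (α : ℤ) - 2 * (i : ℤ) + 3 := by
  classical
  intro i hi1 his
  have hiIcc : i ∈ Finset.Icc 1 s := Finset.mem_Icc.mpr ⟨by omega, his⟩
  have hneI : (I i).Nonempty := hne i hiIcc
  set b := (I i).min' hneI with hbdef
  have hbI : b ∈ I i := Finset.min'_mem _ _
  have hbmin : ∀ x ∈ I i, b ≤ x := fun x hx => Finset.min'_le _ _ hx
  have hIcc_of : ∀ x ∈ I i, 1 ≤ x ∧ x ≤ famHeight F := by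
    intro x hx
    exact Finset.mem_Icc.mp (hsub i hiIcc hx)
  have hb1 : 1 ≤ b := (hIcc_of b hbI).1
  have hbt : b ≤ famHeight F := (hIcc_of b hbI).2
  -- Claim AB: no union of two low-or-I_i-rank sets lands at an I_i rank above b
  have hAB : ∀ r' rC, r' ∈ I i → rC ∈ I i → r' < rC →
      (∀ x ∈ I i, r' < x → rC ≤ x) →
      ∀ A B C pa pb, A ∈ level F pa → B ∈ level F pb → C ∈ level F rC →
      pa ≤ r' → pb ≤ r' → A ∪ B = C → A ≠ C → B ≠ C → False := by
    intro r' rC hr'I hrCI hlt hmax A B C pa pb hA hB hC hpa hpb hU hACne hBCne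
    have hr'1 : 1 ≤ r' := (hIcc_of r' hr'I).1
    have hr't : r' ≤ famHeight F := (hIcc_of r' hr'I).2
    have hrCt : rC ≤ famHeight F := (hIcc_of rC hrCI).2
    apply hnextNonadj i hiIcc r' hr'I rC hrCI hlt hmax
    have hAF : A ∈ F := level_subset hA
    have hBF : B ∈ F := level_subset hB
    have hCF : C ∈ F := level_subset hC
    have hAC : A ⊂ C := Finset.ssubset_iff_subset_ne.mpr ⟨hU ▸ Finset.subset_union_left, hACne⟩
    have hBC : B ⊂ C := Finset.ssubset_iff_subset_ne.mpr ⟨hU ▸ Finset.subset_union_right, hBCne⟩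
    obtain ⟨gA, hgAp, hgAmem, hgAss⟩ := exists_chain_fun hA (rC - 1) (by omega) (by omega)
    obtain ⟨gB, hgBp, hgBmem, hgBss⟩ := exists_chain_fun hB (rC - 1) (by omega) (by omega)
    have hgAmono : ∀ j, pa ≤ j → j ≤ rC - 1 → A ⊆ gA j := by
      intro j h1 h2
      rcases Nat.lt_or_ge pa j with h | h
      · exact le_of_lt (Finset.lt_iff_ssubset.mpr (hgAp ▸ hgAss pa j le_rfl h h2))
      · have : j = pa := by omega
        subst this; rw [hgAp]
    have hgBmono : ∀ j, pb ≤ j → j ≤ rC - 1 → B ⊆ gB j := by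
      intro j h1 h2
      rcases Nat.lt_or_ge pb j with h | h
      · exact le_of_lt (Finset.lt_iff_ssubset.mpr (hgBp ▸ hgBss pb j le_rfl h h2))
      · have : j = pb := by omega
        subst this; rw [hgBp]
    refine ⟨hr'1, hlt, hrCt, gA, gB, ?_, ?_, ?_, ?_, ?_, ?_, ?_⟩
    · intro j h1 h2; exact hgAmem j (by omega) (by omega)
    · intro j h1 h2; exact hgBmem j (by omega) (by omega)
    · intro j k h1 h2 h3; exact hgAss j k (by omega) h2 (by omega)
    · intro j k h1 h2 h3; exact hgBss j k (by omega) h2 (by omega)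
    · intro j k hj1 hj2 hk1 hk2 heq
      have hAj : gA j ∈ level F j := hgAmem j (by omega) (by omega)
      have hBk : gB k ∈ level F k := hgBmem k (by omega) (by omega)
      have hjk : j = k := level_unique (by omega) (by omega) (heq ▸ hAj) hBk
      subst hjk
      have hBsub : B ⊆ gA j := by
        rw [heq]; exact hgBmono j (by omega) (by omega)
      have hCW : C ⊆ gA j := by
        rw [← hU]
        exact Finset.union_subset (hgAmono j (by omega) (by omega)) hBsub
      have hWneC : gA j ≠ C := by
        intro h
        have := level_unique (by omega : j ≤ famHeight F) hrCt (h ▸ hAj) hC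
        omega
      have hCss : C ⊂ gA j := Finset.ssubset_iff_subset_ne.mpr ⟨hCW, fun hh => hWneC hh.symm⟩
      have := level_lt hrCt (by omega : j ≤ famHeight F) hC hAj hCss
      omega
    · intro j k hj1 hj2 hk1 hk2
      by_cases hUF2 : gA j ∪ gB k ∈ F
      · by_cases hUC : gA j ∪ gB k = C
        · right; left; rw [hUC]; exact hC
        · have hCsub : C ⊆ gA j ∪ gB k := by
            rw [← hU]
            exact Finset.union_subset_union (hgAmono j (by omega) (by omega))
              (hgBmono k (by omega) (by omega))
          have hss : C ⊂ gA j ∪ gB k :=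
            Finset.ssubset_iff_subset_ne.mpr ⟨hCsub, fun h => hUC h.symm⟩
          obtain ⟨r, hr1, hrt, hmem⟩ := exists_level hUF2
          exact Or.inr (Or.inr ⟨r, level_lt hrCt hrt hC hmem hss, hrt, hmem⟩)
      · exact Or.inl hUF2
    · intro j₁ k₁ j₂ k₂ h1 h2 h3 h4 h5 h6 h7 h8 hm1 hm2
      have key : ∀ j k, r' ≤ j → j < rC → r' ≤ k → k < rC →
          gA j ∪ gB k ∈ level F rC → gA j ∪ gB k = C := by
        intro j k hja hjb hka hkb hmem
        by_contra hne'
        have hCsub : C ⊆ gA j ∪ gB k := by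
          rw [← hU]
          exact Finset.union_subset_union (hgAmono j (by omega) (by omega))
            (hgBmono k (by omega) (by omega))
        exact level_antichain hC hmem
          (Finset.ssubset_iff_subset_ne.mpr ⟨hCsub, fun h => hne' h.symm⟩)
      rw [key j₁ k₁ h1 h2 h3 h4 hm1, key j₂ k₂ h5 h6 h7 h8 hm2]
  -- predecessor in I i
  have hpred : ∀ rC, rC ∈ I i → b < rC → ∃ r', r' ∈ I i ∧ r' < rC ∧ b ≤ r' ∧
      (∀ x ∈ I i, x < rC → x ≤ r') ∧ (∀ x ∈ I i, r' < x → rC ≤ x) := by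
    intro rC hrCI hbrC
    have hSne : ((I i).filter (· < rC)).Nonempty :=
      ⟨b, Finset.mem_filter.mpr ⟨hbI, hbrC⟩⟩
    have hr'mem := Finset.max'_mem _ hSne
    rw [Finset.mem_filter] at hr'mem
    refine ⟨((I i).filter (· < rC)).max' hSne, hr'mem.1, hr'mem.2, ?_, ?_, ?_⟩
    · have hmm : b ∈ (I i).filter (· < rC) := Finset.mem_filter.mpr ⟨hbI, hbrC⟩
      exact Finset.le_max' _ b hmm
    · intro x hx hxrC
      have hmm : x ∈ (I i).filter (· < rC) := Finset.mem_filter.mpr ⟨hx, hxrC⟩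
      exact Finset.le_max' _ x hmm
    · intro x hx hr'x
      by_contra h
      have hxrC : x < rC := by omega
      have hmm : x ∈ (I i).filter (· < rC) := Finset.mem_filter.mpr ⟨hx, hxrC⟩
      have := Finset.le_max' _ x hmm
      omega
  have hAB2 : ∀ A B C pa pb rC, A ∈ level F pa → B ∈ level F pb → C ∈ level F rC →
      rC ∈ I i → b < rC → (pa < b ∨ pa ∈ I i) → (pb < b ∨ pb ∈ I i) →
      A ∪ B = C → A ≠ C → B ≠ C → False := by
    intro A B C pa pb rC hA hB hC hrCI hbrC hpaC hpbC hU hACne hBCne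
    obtain ⟨r', hr'I, hr'lt, hbr', hmax1, hmax2⟩ := hpred rC hrCI hbrC
    have hrCt := (hIcc_of rC hrCI).2
    have hpa' : pa ≤ r' := by
      rcases hpaC with h | h
      · omega
      · have hpat : pa ≤ famHeight F := (hIcc_of pa h).2
        have : pa < rC := level_lt hpat hrCt hA hC
          (Finset.ssubset_iff_subset_ne.mpr ⟨hU ▸ Finset.subset_union_left, hACne⟩)
        exact hmax1 pa h this
    have hpb' : pb ≤ r' := by
      rcases hpbC with h | h
      · omega
      · have hpbt : pb ≤ famHeight F := (hIcc_of pb h).2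
        have : pb < rC := level_lt hpbt hrCt hB hC
          (Finset.ssubset_iff_subset_ne.mpr ⟨hU ▸ Finset.subset_union_right, hBCne⟩)
        exact hmax1 pb h this
    exact hAB r' rC hr'I hrCI hr'lt hmax2 A B C pa pb hA hB hC hpa' hpb' hU hACne hBCne
  -- greedy gives an edge from each earlier I i' into b
  have hedge : ∀ i', 1 ≤ i' → i' < i → ∃ v, v ∈ I i' ∧ v < b ∧ HEdge F v b := by
    intro i' h1 h2
    have hi'Icc : i' ∈ Finset.Icc 1 s := Finset.mem_Icc.mpr ⟨h1, by omega⟩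
    have hbprev : b ∉ prevSets I i' := by
      intro hmem
      rw [prevSets, Finset.mem_biUnion] at hmem
      obtain ⟨k, hk, hbk⟩ := hmem
      rw [Finset.mem_Ico] at hk
      have hkIcc : k ∈ Finset.Icc 1 s := Finset.mem_Icc.mpr ⟨hk.1, by omega⟩
      exact (Finset.disjoint_left.mp (hdisj k hkIcc i hiIcc (by omega))) hbk hbI
    have hbIcc2 : b ∈ Finset.Icc 1 (famHeight F) := Finset.mem_Icc.mpr ⟨hb1, hbt⟩
    have hne' : (I i').Nonempty := hne i' hi'Icc
    have hminle : (I i').min' hne' ≤ b :=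
      hmin i' hi'Icc _ (Finset.min'_mem _ _) (fun w hw => Finset.min'_le _ _ hw) b hbIcc2 hbprev
    have hminne : (I i').min' hne' ≠ b := by
      intro h
      have hmm := Finset.min'_mem (I i') hne'
      rw [h] at hmm
      exact (Finset.disjoint_left.mp (hdisj i' hi'Icc i hiIcc (by omega))) hmm hbI
    have hfne : ((I i').filter (· < b)).Nonempty :=
      ⟨(I i').min' hne', Finset.mem_filter.mpr ⟨Finset.min'_mem _ _, by omega⟩⟩
    have hvmem := Finset.max'_mem _ hfne
    rw [Finset.mem_filter] at hvmem
    refine ⟨((I i').filter (· < b)).max' hfne, hvmem.1, hvmem.2, ?_⟩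
    by_contra hnotedge
    obtain ⟨w, hwI, hvw, hwb⟩ := hnextMin i' hi'Icc _ hvmem.1 b hbIcc2 hvmem.2 hbprev hnotedge
    have hwb' : w < b := by
      rcases lt_or_eq_of_le hwb with h | h
      · exact h
      · exfalso
        rw [h] at hwI
        exact (Finset.disjoint_left.mp (hdisj i' hi'Icc i hiIcc (by omega))) hwI hbI
    have hmm : w ∈ (I i').filter (· < b) := Finset.mem_filter.mpr ⟨hwI, hwb'⟩
    have := Finset.le_max' _ w hmm
    omega
  -- choose the witness with minimal bottom rank v
  have hchoice : ∀ i' ∈ Finset.Ico 1 i, ∃ v, v ∈ I i' ∧ v < b ∧ HEdge F v b := by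
    intro i' hi'
    rw [Finset.mem_Ico] at hi'
    exact hedge i' hi'.1 hi'.2
  choose! f hf1 hf2 hf3 using hchoice
  have hIcoNe : (Finset.Ico 1 i).Nonempty := ⟨1, Finset.mem_Ico.mpr ⟨le_rfl, by omega⟩⟩
  have hVne : ((Finset.Ico 1 i).image f).Nonempty := hIcoNe.image f
  set v := ((Finset.Ico 1 i).image f).min' hVne with hvdef
  have hvV : v ∈ (Finset.Ico 1 i).image f := Finset.min'_mem _ _
  obtain ⟨i₀, hi₀, hvi₀⟩ := Finset.mem_image.mp hvV
  have hvb : v < b := by rw [← hvi₀]; exact hf2 i₀ hi₀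
  have hEdge : HEdge F v b := by rw [← hvi₀]; exact hf3 i₀ hi₀
  have hVcard : ((Finset.Ico 1 i).image f).card = i - 1 := by
    rw [Finset.card_image_of_injOn, Nat.card_Ico]
    intro x hx y hy hxy
    by_contra hne'
    simp only [Finset.coe_Ico, Set.mem_Ico] at hx hy
    have hd := hdisj x (Finset.mem_Icc.mpr ⟨hx.1, by omega⟩) y
      (Finset.mem_Icc.mpr ⟨hy.1, by omega⟩) hne'
    have hfy : f x ∈ I y := by
      rw [hxy]; exact hf1 y (Finset.mem_Ico.mpr ⟨hy.1, hy.2⟩)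
    exact (Finset.disjoint_left.mp hd) (hf1 x (Finset.mem_Ico.mpr ⟨hx.1, hx.2⟩)) hfy
  have hVsub : (Finset.Ico 1 i).image f ⊆ Finset.Ico v b := by
    intro x hx
    rw [Finset.mem_Ico]
    obtain ⟨i', hi', hxe⟩ := Finset.mem_image.mp hx
    constructor
    · exact Finset.min'_le _ _ hx
    · rw [← hxe]; exact hf2 i' hi'
  have hbv : i - 1 ≤ b - v := by
    have h1 := Finset.card_le_card hVsub
    rw [hVcard, Nat.card_Ico] at h1
    exact h1
  have hv1 : 1 ≤ v := by
    rw [← hvi₀]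
    have := hsub i₀ (Finset.mem_Icc.mpr (by rw [Finset.mem_Ico] at hi₀; omega)) (hf1 i₀ hi₀)
    exact (Finset.mem_Icc.mp this).1
  obtain ⟨-, -, -, Xc, Yc, hXmem, hYmem, hXss, hYss, hXYne, hUn, hUq⟩ := hEdge
  -- the union-free family
  set T := (I i).biUnion (fun j => level F j) with hT
  set P : Finset ℕ → Prop :=
    (fun W => ∀ j k, v ≤ j → j < b → v ≤ k → k < b → Xc j ∪ Yc k ≠ W) with hP
  set SX := (Finset.Ico v b).image Xc with hSX
  set SY := (Finset.Ico v b).image Yc with hSY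
  set G : Finset (Finset ℕ) := (T.filter P ∪ SX) ∪ SY with hG
  have hmemT : ∀ W ∈ T, ∃ r, r ∈ I i ∧ W ∈ level F r ∧ b ≤ r ∧ r ≤ famHeight F := by
    intro W hW
    rw [hT, Finset.mem_biUnion] at hW
    obtain ⟨r, hrI, hWr⟩ := hW
    exact ⟨r, hrI, hWr, hbmin r hrI, (hIcc_of r hrI).2⟩
  have hmemG : ∀ W ∈ G, (W ∈ T.filter P) ∨
      (∃ j, v ≤ j ∧ j < b ∧ W = Xc j) ∨ (∃ j, v ≤ j ∧ j < b ∧ W = Yc j) := by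
    intro W hW
    rw [hG, Finset.mem_union, Finset.mem_union] at hW
    rcases hW with (h | h) | h
    · exact Or.inl h
    · right; left
      obtain ⟨j, hj, rfl⟩ := Finset.mem_image.mp h
      rw [Finset.mem_Ico] at hj
      exact ⟨j, hj.1, hj.2, rfl⟩
    · right; right
      obtain ⟨j, hj, rfl⟩ := Finset.mem_image.mp h
      rw [Finset.mem_Ico] at hj
      exact ⟨j, hj.1, hj.2, rfl⟩
  have hGF : G ⊆ F := by
    intro W hW
    rcases hmemG W hW with h | ⟨j, h1, h2, he⟩ | ⟨j, h1, h2, he⟩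
    · obtain ⟨r, _, hWr, _, _⟩ := hmemT W (Finset.mem_filter.mp h).1
      exact level_subset hWr
    · rw [he]; exact level_subset (hXmem j h1 h2)
    · rw [he]; exact level_subset (hYmem j h1 h2)
  -- same-chain triples are impossible
  have hsame : ∀ (g : ℕ → Finset ℕ), (∀ j k, v ≤ j → j < k → k < b → g j ⊂ g k) →
      ∀ j k (D : Finset ℕ), v ≤ j → j < b → v ≤ k → k < b →
      g j ∪ g k = D → g j ≠ D → g k ≠ D → False := by
    intro g hss j k D hj1 hj2 hk1 hk2 hU hjD hkD
    rcases lt_trichotomy j k with h | h | h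
    · have h2 : g j ∪ g k = g k :=
        Finset.union_eq_right.mpr (hss j k hj1 h hk2).subset
      exact hkD (h2 ▸ hU)
    · subst h
      have h2 : g j ∪ g j = g j := Finset.union_self _
      exact hjD (h2 ▸ hU)
    · have h2 : g j ∪ g k = g j :=
        Finset.union_eq_left.mpr (hss k j hk1 h hj2).subset
      exact hjD (h2 ▸ hU)
  -- mixed unions cannot land at any rank other than b
  have hmixed : ∀ j k, v ≤ j → j < b → v ≤ k → k < b →
      ∀ (D : Finset ℕ) rD, D ∈ level F rD → rD ≤ famHeight F → rD < b →
      Xc j ∪ Yc k = D → False := by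
    intro j k hj1 hj2 hk1 hk2 D rD hD hrDt hrDb hU
    rcases hUn j k hj1 hj2 hk1 hk2 with h | h | ⟨r, hr1, hr2, h⟩
    · rw [hU] at h
      exact h (level_subset hD)
    · rw [hU] at h
      have := level_unique hrDt hbt hD h
      omega
    · rw [hU] at h
      have := level_unique hrDt hr2 hD h
      omega
  have hGuf : UnionFree G := by
    intro A hA B hB C hC hABne hACne hBCne hU
    have hAC : A ⊂ C := Finset.ssubset_iff_subset_ne.mpr ⟨hU ▸ Finset.subset_union_left, hACne⟩
    have hBC : B ⊂ C := Finset.ssubset_iff_subset_ne.mpr ⟨hU ▸ Finset.subset_union_right, hBCne⟩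
    have hclass : ∀ W, W ∈ G → ∃ p, W ∈ level F p ∧ p ≤ famHeight F ∧ (p < b ∨ p ∈ I i) := by
      intro W hW
      rcases hmemG W hW with hWT | ⟨j, h1, h2, he⟩ | ⟨j, h1, h2, he⟩
      · obtain ⟨r, hrI, hWr, _, hrt⟩ := hmemT W (Finset.mem_filter.mp hWT).1
        exact ⟨r, hWr, hrt, Or.inr hrI⟩
      · exact ⟨j, he ▸ hXmem j h1 h2, by omega, Or.inl h2⟩
      · exact ⟨j, he ▸ hYmem j h1 h2, by omega, Or.inl h2⟩
    rcases hmemG C hC with hCT | ⟨jc, hjc1, hjc2, hCe⟩ | ⟨jc, hjc1, hjc2, hCe⟩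
    · -- C in the top part
      obtain ⟨hCT', hCP⟩ := Finset.mem_filter.mp hCT
      obtain ⟨rC, hrCI, hCr, hbrC, hrCt⟩ := hmemT C hCT'
      rcases eq_or_lt_of_le hbrC with heq | hlt
      · -- rC = b : A and B must be chain elements
        have hgetlow : ∀ W, W ∈ G → W ⊂ C →
            (∃ j, v ≤ j ∧ j < b ∧ W = Xc j) ∨ (∃ j, v ≤ j ∧ j < b ∧ W = Yc j) := by
          intro W hW hWC
          rcases hmemG W hW with hWT | h | h
          · exfalso
            obtain ⟨rW, hrWI, hWr, hbrW, hrWt⟩ := hmemT W (Finset.mem_filter.mp hWT).1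
            have := level_lt hrWt hrCt hWr hCr hWC
            omega
          · exact Or.inl h
          · exact Or.inr h
        have hPC : ∀ j k, v ≤ j → j < b → v ≤ k → k < b → Xc j ∪ Yc k ≠ C := by
          intro j k h1 h2 h3 h4
          have := hCP
          rw [hP] at this
          exact this j k h1 h2 h3 h4
        rcases hgetlow A hA hAC with ⟨j, hj1, hj2, hAe⟩ | ⟨j, hj1, hj2, hAe⟩ <;>
          rcases hgetlow B hB hBC with ⟨k, hk1, hk2, hBe⟩ | ⟨k, hk1, hk2, hBe⟩
        · exact hsame Xc hXss j k C hj1 hj2 hk1 hk2 (by rw [← hAe, ← hBe]; exact hU)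
            (by rw [← hAe]; exact hACne) (by rw [← hBe]; exact hBCne)
        · exact hPC j k hj1 hj2 hk1 hk2 (by rw [← hAe, ← hBe]; exact hU)
        · exact hPC k j hk1 hk2 hj1 hj2 (by rw [← hBe, ← hAe, Finset.union_comm]; exact hU)
        · exact hsame Yc hYss j k C hj1 hj2 hk1 hk2 (by rw [← hAe, ← hBe]; exact hU)
            (by rw [← hAe]; exact hACne) (by rw [← hBe]; exact hBCne)
      · -- b < rC : apply Claim AB
        obtain ⟨pa, hpaA, hpat, hpaC⟩ := hclass A hA
        obtain ⟨pb, hpbB, hpbt, hpbC⟩ := hclass B hB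
        exact hAB2 A B C pa pb rC hpaA hpbB hCr hrCI hlt hpaC hpbC hU hACne hBCne
    · -- C = Xc jc
      have hCl : C ∈ level F jc := hCe ▸ hXmem jc hjc1 hjc2
      have hgetlow : ∀ W, W ∈ G → W ⊂ C →
          (∃ j, v ≤ j ∧ j < b ∧ W = Xc j) ∨ (∃ j, v ≤ j ∧ j < b ∧ W = Yc j) := by
        intro W hW hWC
        rcases hmemG W hW with hWT | h | h
        · exfalso
          obtain ⟨rW, hrWI, hWr, hbrW, hrWt⟩ := hmemT W (Finset.mem_filter.mp hWT).1
          have := level_lt hrWt (by omega : jc ≤ famHeight F) hWr hCl hWC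
          omega
        · exact Or.inl h
        · exact Or.inr h
      rcases hgetlow A hA hAC with ⟨j, hj1, hj2, hAe⟩ | ⟨j, hj1, hj2, hAe⟩ <;>
        rcases hgetlow B hB hBC with ⟨k, hk1, hk2, hBe⟩ | ⟨k, hk1, hk2, hBe⟩
      · exact hsame Xc hXss j k C hj1 hj2 hk1 hk2 (by rw [← hAe, ← hBe]; exact hU)
          (by rw [← hAe]; exact hACne) (by rw [← hBe]; exact hBCne)
      · exact hmixed j k hj1 hj2 hk1 hk2 C jc hCl (by omega) (by omega)
          (by rw [← hAe, ← hBe]; exact hU)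
      · exact hmixed k j hk1 hk2 hj1 hj2 C jc hCl (by omega) (by omega)
          (by rw [← hBe, ← hAe, Finset.union_comm]; exact hU)
      · exact hsame Yc hYss j k C hj1 hj2 hk1 hk2 (by rw [← hAe, ← hBe]; exact hU)
          (by rw [← hAe]; exact hACne) (by rw [← hBe]; exact hBCne)
    · -- C = Yc jc
      have hCl : C ∈ level F jc := hCe ▸ hYmem jc hjc1 hjc2
      have hgetlow : ∀ W, W ∈ G → W ⊂ C →
          (∃ j, v ≤ j ∧ j < b ∧ W = Xc j) ∨ (∃ j, v ≤ j ∧ j < b ∧ W = Yc j) := by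
        intro W hW hWC
        rcases hmemG W hW with hWT | h | h
        · exfalso
          obtain ⟨rW, hrWI, hWr, hbrW, hrWt⟩ := hmemT W (Finset.mem_filter.mp hWT).1
          have := level_lt hrWt (by omega : jc ≤ famHeight F) hWr hCl hWC
          omega
        · exact Or.inl h
        · exact Or.inr h
      rcases hgetlow A hA hAC with ⟨j, hj1, hj2, hAe⟩ | ⟨j, hj1, hj2, hAe⟩ <;>
        rcases hgetlow B hB hBC with ⟨k, hk1, hk2, hBe⟩ | ⟨k, hk1, hk2, hBe⟩
      · exact hsame Xc hXss j k C hj1 hj2 hk1 hk2 (by rw [← hAe, ← hBe]; exact hU)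
          (by rw [← hAe]; exact hACne) (by rw [← hBe]; exact hBCne)
      · exact hmixed j k hj1 hj2 hk1 hk2 C jc hCl (by omega) (by omega)
          (by rw [← hAe, ← hBe]; exact hU)
      · exact hmixed k j hk1 hk2 hj1 hj2 C jc hCl (by omega) (by omega)
          (by rw [← hBe, ← hAe, Finset.union_comm]; exact hU)
      · exact hsame Yc hYss j k C hj1 hj2 hk1 hk2 (by rw [← hAe, ← hBe]; exact hU)
          (by rw [← hAe]; exact hACne) (by rw [← hBe]; exact hBCne)
  -- counting
  have hdisjXY : Disjoint SX SY := by
    rw [Finset.disjoint_left]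
    intro W hWX hWY
    rw [hSX] at hWX; rw [hSY] at hWY
    obtain ⟨j, hj, hje⟩ := Finset.mem_image.mp hWX
    obtain ⟨k, hk, hke⟩ := Finset.mem_image.mp hWY
    rw [Finset.mem_Ico] at hj hk
    exact hXYne j k hj.1 hj.2 hk.1 hk.2 (by rw [hje, hke])
  have hdisjTX : Disjoint (T.filter P) SX := by
    rw [Finset.disjoint_left]
    intro W hWT hWX
    obtain ⟨r, hrI, hWr, hbr, hrt⟩ := hmemT W (Finset.mem_filter.mp hWT).1
    rw [hSX] at hWX
    obtain ⟨j, hj, hje⟩ := Finset.mem_image.mp hWX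
    rw [Finset.mem_Ico] at hj
    have hWj : W ∈ level F j := by rw [← hje]; exact hXmem j hj.1 hj.2
    have := level_unique hrt (by omega) hWr hWj
    omega
  have hdisjTY : Disjoint (T.filter P) SY := by
    rw [Finset.disjoint_left]
    intro W hWT hWY
    obtain ⟨r, hrI, hWr, hbr, hrt⟩ := hmemT W (Finset.mem_filter.mp hWT).1
    rw [hSY] at hWY
    obtain ⟨j, hj, hje⟩ := Finset.mem_image.mp hWY
    rw [Finset.mem_Ico] at hj
    have hWj : W ∈ level F j := by rw [← hje]; exact hYmem j hj.1 hj.2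
    have := level_unique hrt (by omega) hWr hWj
    omega
  have hcardSX : SX.card = b - v := by
    rw [hSX, Finset.card_image_of_injOn, Nat.card_Ico]
    intro x hx y hy hxy
    by_contra hne'
    simp only [Finset.coe_Ico, Set.mem_Ico] at hx hy
    rcases Nat.lt_or_ge x y with h | h
    · exact (Finset.ssubset_iff_subset_ne.mp (hXss x y hx.1 h hy.2)).2 hxy
    · exact (Finset.ssubset_iff_subset_ne.mp (hXss y x hy.1 (by omega) hx.2)).2 hxy.symm
  have hcardSY : SY.card = b - v := by
    rw [hSY, Finset.card_image_of_injOn, Nat.card_Ico]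
    intro x hx y hy hxy
    by_contra hne'
    simp only [Finset.coe_Ico, Set.mem_Ico] at hx hy
    rcases Nat.lt_or_ge x y with h | h
    · exact (Finset.ssubset_iff_subset_ne.mp (hYss x y hx.1 h hy.2)).2 hxy
    · exact (Finset.ssubset_iff_subset_ne.mp (hYss y x hy.1 (by omega) hx.2)).2 hxy.symm
  have hcardG : G.card = (T.filter P).card + (b - v) + (b - v) := by
    rw [hG, Finset.card_union_of_disjoint
      (Finset.disjoint_union_left.mpr ⟨hdisjTY, hdisjXY⟩),
      Finset.card_union_of_disjoint hdisjTX, hcardSX, hcardSY]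
  have hTfilter : T.card ≤ (T.filter P).card + 1 := by
    have hsplit := Finset.card_filter_add_card_filter_not (s := T) (p := P)
    have hWlev : ∀ (W : Finset ℕ) j k, W ∈ T → v ≤ j → j < b → v ≤ k → k < b →
        Xc j ∪ Yc k = W → W ∈ level F b := by
      intro W j k hWT hj hjb hk hkb he
      obtain ⟨rW, hrWI, hWr, hbrW, hrWt⟩ := hmemT W hWT
      rcases hUn j k hj hjb hk hkb with h | h | ⟨r, hr1, hr2, h⟩
      · rw [he] at h
        exact absurd (level_subset hWr) h
      · rw [he] at h
        exact h
      · exfalso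
        rw [he] at h
        have hrr : rW = r := level_unique hrWt hr2 hWr h
        subst hrr
        have hAne : Xc j ≠ W := by
          intro hh
          have hWj : W ∈ level F j := hh ▸ hXmem j hj hjb
          have := level_unique (by omega : j ≤ famHeight F) hrWt hWj hWr
          omega
        have hBne : Yc k ≠ W := by
          intro hh
          have hWk : W ∈ level F k := hh ▸ hYmem k hk hkb
          have := level_unique (by omega : k ≤ famHeight F) hrWt hWk hWr
          omega
        exact hAB2 (Xc j) (Yc k) W j k rW (hXmem j hj hjb) (hYmem k hk hkb) hWr hrWI
          (by omega) (Or.inl hjb) (Or.inl hkb) he hAne hBne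
    have hone : (T.filter (fun W => ¬ P W)).card ≤ 1 := by
      rw [Finset.card_le_one]
      intro W1 h1 W2 h2
      obtain ⟨hW1T, hW1⟩ := Finset.mem_filter.mp h1
      obtain ⟨hW2T, hW2⟩ := Finset.mem_filter.mp h2
      have hW1' : ∃ j k, v ≤ j ∧ j < b ∧ v ≤ k ∧ k < b ∧ Xc j ∪ Yc k = W1 := by
        by_contra hc
        apply hW1
        rw [hP]
        intro j k a1 a2 a3 a4 heq
        exact hc ⟨j, k, a1, a2, a3, a4, heq⟩
      have hW2' : ∃ j k, v ≤ j ∧ j < b ∧ v ≤ k ∧ k < b ∧ Xc j ∪ Yc k = W2 := by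
        by_contra hc
        apply hW2
        rw [hP]
        intro j k a1 a2 a3 a4 heq
        exact hc ⟨j, k, a1, a2, a3, a4, heq⟩
      obtain ⟨j1, k1, hj1, hj1b, hk1, hk1b, he1⟩ := hW1'
      obtain ⟨j2, k2, hj2, hj2b, hk2, hk2b, he2⟩ := hW2'
      have hW1b := hWlev W1 j1 k1 hW1T hj1 hj1b hk1 hk1b he1
      have hW2b := hWlev W2 j2 k2 hW2T hj2 hj2b hk2 hk2b he2
      have m1 : Xc j1 ∪ Yc k1 ∈ level F b := by rw [he1]; exact hW1b
      have m2 : Xc j2 ∪ Yc k2 ∈ level F b := by rw [he2]; exact hW2b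
      have := hUq j1 k1 j2 k2 hj1 hj1b hk1 hk1b hj2 hj2b hk2 hk2b m1 m2
      rw [he1, he2] at this
      exact this
    omega
  have hcardT : T.card = ∑ j ∈ I i, (level F j).card := by
    rw [hT]
    apply Finset.card_biUnion
    intro x hx y hy hxy
    rw [Function.onFun_apply, Finset.disjoint_left]
    intro W hWx hWy
    exact hxy (level_unique (hIcc_of x hx).2 (hIcc_of y hy).2 hWx hWy)
  have hαG : G.card ≤ α := hα.2 ⟨G, hGF, hGuf, rfl⟩
  have hfin : (∑ j ∈ I i, ((level F j).card : ℤ)) = (T.card : ℤ) := by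
    rw [hcardT]
    push_cast
    ring
  rw [hfin]
  omega
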